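/- Let N ≥ 1 be an integer and θ_0, …, θ_{N−1} positive real numbers. There exist unique real numbers c, d_0, …, d_{N−1} such that the functions u_k(x) = −(1/θ_k)(x²/2 + c x) + d_k satisfy the boundary conditions u_0(0) = 0 and u_{N−1}(1) = 0 together with the continuity constraints u_{k−1}(k/N) = u_k(k/N) for all k ∈ {1,…,N−1}. They are given explicitly by d_0 = 0, c = −(1/(2N)) (Σ_{k=0}^{N−1} θ_k^{−1}(2k+1)) / (Σ_{k=0}^{N−1} θ_k^{−1}), and d_k = −Σ_{j=1}^{k} ((1/2)(j/N)² + c(j/N)) (θ_{j−1}^{−1} − θ_j^{−1}) for 1 ≤ k ≤ N−1. -/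

import Mathlib

/-- The pieces `u_k x = -(1/θ_k)(x²/2 + cx) + d_k` satisfy the boundary conditions
`u_0 0 = 0`, `u_{N-1} 1 = 0` and the continuity constraints `u_{k-1}(k/N) = u_k(k/N)`. -/
def PoissonPiecewiseConditions (N : ℕ) (θ : ℕ → ℝ) (c : ℝ) (d : ℕ → ℝ) : Prop :=
  (-(1 / θ 0) * ((0 : ℝ) ^ 2 / 2 + c * 0) + d 0 = 0) ∧
  (-(1 / θ (N - 1)) * ((1 : ℝ) ^ 2 / 2 + c * 1) + d (N - 1) = 0) ∧
  (∀ k, 1 ≤ k → k ≤ N - 1 →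
    -(1 / θ (k - 1)) * (((k : ℝ) / N) ^ 2 / 2 + c * ((k : ℝ) / N)) + d (k - 1) =
      -(1 / θ k) * (((k : ℝ) / N) ^ 2 / 2 + c * ((k : ℝ) / N)) + d k)

section Aux

lemma abel_sum (a g : ℕ → ℝ) (hg0 : g 0 = 0) (n : ℕ) :
    ∑ j ∈ Finset.Icc 1 n, g j * (a (j-1) - a j)
      = (∑ j ∈ Finset.range (n+1), a j * (g (j+1) - g j)) - a n * g (n+1) := by
  induction n with
  | zero => simp [hg0]
  | succ n ih =>
      rw [Finset.sum_Icc_succ_top (Nat.succ_le_succ (Nat.zero_le n)), ih]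
      conv_rhs => rw [Finset.sum_range_succ]
      simp only [Nat.add_sub_cancel]
      ring

noncomputable def S0 (N : ℕ) (θ : ℕ → ℝ) : ℝ := ∑ k ∈ Finset.range N, (θ k)⁻¹
noncomputable def S1 (N : ℕ) (θ : ℕ → ℝ) : ℝ :=
  ∑ k ∈ Finset.range N, (θ k)⁻¹ * (2 * (k : ℝ) + 1)
noncomputable def cstar (N : ℕ) (θ : ℕ → ℝ) : ℝ := -((1/(2*(N:ℝ))) * (S1 N θ / S0 N θ))
noncomputable def gfun (N : ℕ) (c : ℝ) (j : ℕ) : ℝ :=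
  (1/2) * ((j:ℝ)/N)^2 + c * ((j:ℝ)/N)
noncomputable def dfun (N : ℕ) (θ : ℕ → ℝ) (c : ℝ) (k : ℕ) : ℝ :=
  -∑ j ∈ Finset.Icc 1 k, gfun N c j * ((θ (j-1))⁻¹ - (θ j)⁻¹)

lemma S0_pos (N : ℕ) (hN : 1 ≤ N) (θ : ℕ → ℝ) (hθ : ∀ k < N, 0 < θ k) :
    0 < S0 N θ :=
  Finset.sum_pos (fun k hk => inv_pos.mpr (hθ k (Finset.mem_range.mp hk)))
    (Finset.nonempty_range_iff.mpr (by omega))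

lemma Fval (N : ℕ) (hN : 1 ≤ N) (θ : ℕ → ℝ) (c : ℝ) :
    ∑ j ∈ Finset.range N, (θ j)⁻¹ * (gfun N c (j+1) - gfun N c j)
      = S1 N θ / (2*(N:ℝ)^2) + (c/N) * S0 N θ := by
  have hN0 : (N:ℝ) ≠ 0 := Nat.cast_ne_zero.mpr (by omega)
  have key : ∀ j ∈ Finset.range N, (θ j)⁻¹ * (gfun N c (j+1) - gfun N c j)
      = ((θ j)⁻¹ * (2 * (j:ℝ) + 1)) * (1/(2*(N:ℝ)^2)) + (θ j)⁻¹ * (c/N) := by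
    intro j _
    have h : gfun N c (j+1) - gfun N c j = (2*(j:ℝ)+1)/(2*(N:ℝ)^2) + c/N := by
      unfold gfun; push_cast; field_simp; ring
    rw [h]; ring
  rw [Finset.sum_congr rfl key, Finset.sum_add_distrib, ← Finset.sum_mul, ← Finset.sum_mul]
  unfold S1 S0; ring

lemma Fzero (N : ℕ) (hN : 1 ≤ N) (θ : ℕ → ℝ) (hθ : ∀ k < N, 0 < θ k) :
    ∑ j ∈ Finset.range N, (θ j)⁻¹ * (gfun N (cstar N θ) (j+1) - gfun N (cstar N θ) j) = 0 := by
  have hN0 : (N:ℝ) ≠ 0 := Nat.cast_ne_zero.mpr (by omega)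
  have hS0 : S0 N θ ≠ 0 := ne_of_gt (S0_pos N hN θ hθ)
  rw [Fval N hN θ]
  unfold cstar
  field_simp
  ring

lemma c_of_Fzero (N : ℕ) (hN : 1 ≤ N) (θ : ℕ → ℝ) (hθ : ∀ k < N, 0 < θ k) (c : ℝ)
    (hF : ∑ j ∈ Finset.range N, (θ j)⁻¹ * (gfun N c (j+1) - gfun N c j) = 0) :
    c = cstar N θ := by
  have hN0 : (N:ℝ) ≠ 0 := Nat.cast_ne_zero.mpr (by omega)
  have hS0 : S0 N θ ≠ 0 := ne_of_gt (S0_pos N hN θ hθ)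
  rw [Fval N hN θ] at hF
  unfold cstar
  field_simp at hF ⊢
  have h3 : (N:ℝ) * (c * (2 * (N:ℝ) * S0 N θ) + S1 N θ) = 0 := by linear_combination (N:ℝ) * hF
  rcases mul_eq_zero.mp h3 with h4 | h4
  · exact absurd h4 hN0
  · linarith

lemma dfun_succ (N : ℕ) (θ : ℕ → ℝ) (c : ℝ) (k : ℕ) :
    dfun N θ c (k+1) = dfun N θ c k - gfun N c (k+1) * ((θ k)⁻¹ - (θ (k+1))⁻¹) := by
  unfold dfun
  rw [Finset.sum_Icc_succ_top (Nat.succ_le_succ (Nat.zero_le k))]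
  simp only [Nat.add_sub_cancel]
  ring

lemma d_rec (N : ℕ) (hN : 1 ≤ N) (θ : ℕ → ℝ) (c : ℝ) (d : ℕ → ℝ)
    (h : PoissonPiecewiseConditions N θ c d) :
    ∀ k, k ≤ N - 1 → d k = dfun N θ c k := by
  intro k
  induction k with
  | zero =>
      intro _
      have h1 := h.1
      have hd0 : d 0 = 0 := by
        have : -(1 / θ 0) * ((0 : ℝ) ^ 2 / 2 + c * 0) = 0 := by ring
        linarith [h1, this]
      simp [dfun, hd0]
  | succ k ih =>
      intro hk
      have hk' : k ≤ N - 1 := by omega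
      have hc := h.2.2 (k+1) (Nat.succ_le_succ (Nat.zero_le k)) hk
      simp only [Nat.add_sub_cancel] at hc
      rw [dfun_succ, ← ih hk']
      unfold gfun
      push_cast at hc ⊢
      linear_combination -hc

lemma F_of_cond (N : ℕ) (hN : 1 ≤ N) (θ : ℕ → ℝ) (c : ℝ) (d : ℕ → ℝ)
    (h : PoissonPiecewiseConditions N θ c d) :
    ∑ j ∈ Finset.range N, (θ j)⁻¹ * (gfun N c (j+1) - gfun N c j) = 0 := by
  have hN0 : (N:ℝ) ≠ 0 := Nat.cast_ne_zero.mpr (by omega)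
  have hb := h.2.1
  have hd := d_rec N hN θ c d h (N-1) le_rfl
  have hg0 : gfun N c 0 = 0 := by simp [gfun]
  have habel := abel_sum (fun j => (θ j)⁻¹) (gfun N c) hg0 (N-1)
  have hNN : (N - 1) + 1 = N := by omega
  rw [hNN] at habel
  have hgN : gfun N c N = 1/2 + c := by
    unfold gfun
    rw [div_self hN0]
    ring
  rw [hgN] at habel
  unfold dfun at hd
  linear_combination -habel + hd - hb

lemma existence (N : ℕ) (hN : 1 ≤ N) (θ : ℕ → ℝ) (hθ : ∀ k < N, 0 < θ k) :
    PoissonPiecewiseConditions N θ (cstar N θ) (dfun N θ (cstar N θ)) := by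
  have hN0 : (N:ℝ) ≠ 0 := Nat.cast_ne_zero.mpr (by omega)
  refine ⟨?_, ?_, ?_⟩
  · have : dfun N θ (cstar N θ) 0 = 0 := by simp [dfun]
    rw [this]; ring
  · have hg0 : gfun N (cstar N θ) 0 = 0 := by simp [gfun]
    have habel := abel_sum (fun j => (θ j)⁻¹) (gfun N (cstar N θ)) hg0 (N-1)
    have hNN : (N - 1) + 1 = N := by omega
    rw [hNN] at habel
    have hgN : gfun N (cstar N θ) N = 1/2 + cstar N θ := by
      unfold gfun; rw [div_self hN0]; ring
    rw [hgN] at habel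
    have hF := Fzero N hN θ hθ
    simp only [dfun]
    linear_combination -habel - hF
  · intro k hk1 hk2
    obtain ⟨m, rfl⟩ : ∃ m, k = m + 1 := ⟨k - 1, by omega⟩
    have hs := dfun_succ N θ (cstar N θ) m
    simp only [Nat.add_sub_cancel]
    unfold gfun at hs
    rw [one_div, one_div]
    push_cast at hs ⊢
    linear_combination -hs

end Aux

/-- There exist unique real numbers `c, d_0, …, d_{N-1}` satisfying the two boundary
conditions and the `N-1` continuity constraints, given explicitly by `d_0 = 0`,
`c = -(1/(2N))(Σ θ_k⁻¹(2k+1))/(Σ θ_k⁻¹)` and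
`d_k = -Σ_{j=1}^k ((1/2)(j/N)² + c(j/N))(θ_{j-1}⁻¹ - θ_j⁻¹)`. -/
theorem statement5 (N : ℕ) (hN : 1 ≤ N) (θ : ℕ → ℝ) (hθ : ∀ k < N, 0 < θ k) :
    (PoissonPiecewiseConditions N θ
      (-((1 / (2 * (N : ℝ))) *
        ((∑ k ∈ Finset.range N, (θ k)⁻¹ * (2 * (k : ℝ) + 1)) /
          (∑ k ∈ Finset.range N, (θ k)⁻¹))))
      (fun k => -∑ j ∈ Finset.Icc 1 k,
        ((1 / 2) * ((j : ℝ) / N) ^ 2 +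
          (-((1 / (2 * (N : ℝ))) *
            ((∑ i ∈ Finset.range N, (θ i)⁻¹ * (2 * (i : ℝ) + 1)) /
              (∑ i ∈ Finset.range N, (θ i)⁻¹)))) * ((j : ℝ) / N)) *
          ((θ (j - 1))⁻¹ - (θ j)⁻¹))) ∧
    (∀ c d c' d', PoissonPiecewiseConditions N θ c d →
      PoissonPiecewiseConditions N θ c' d' →
      c = c' ∧ ∀ k < N, d k = d' k) := by
  constructor
  · exact existence N hN θ hθ
  · intro c d c' d' h h'
    have hc : c = cstar N θ := c_of_Fzero N hN θ hθ c (F_of_cond N hN θ c d h)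
    have hc' : c' = cstar N θ := c_of_Fzero N hN θ hθ c' (F_of_cond N hN θ c' d' h')
    refine ⟨hc.trans hc'.symm, ?_⟩
    intro k hk
    have hk' : k ≤ N - 1 := by omega
    rw [d_rec N hN θ c d h k hk', d_rec N hN θ c' d' h' k hk', hc, hc']
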